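/- (Theorem 1, upper bound.) Let S ≥ 1, let B : [0,∞) → M_S(ℝ) and f : [0,∞) → ℝ^S be continuous, and let z*, z** : [0,∞) → ℝ^S be differentiable with (z*)'(t) = B(t)z*(t) + f(t) and (z**)'(t) = B(t)z**(t) + f(t) for all t ≥ 0. Let D be an invertible S×S real matrix with nonnegative entries such that D B(t) D⁻¹ is essentially nonnegative for every t ≥ 0, and set h^*(t) = max_{1≤j≤S} ∑_{i=1}^S (D B(t) D⁻¹)_{ij}. Then ‖D(z*(t) − z**(t))‖₁ ≤ exp(∫₀ᵗ h^*(τ) dτ) · ‖D(z*(0) − z**(0))‖₁ for all t ≥ 0. -/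

import Mathlib

open Set Filter Topology

lemma gronwall_l1 {S : ℕ} [Nonempty (Fin S)]
    (H : ℝ → Matrix (Fin S) (Fin S) ℝ)
    (w : ℝ → Fin S → ℝ)
    (hw : ∀ x ∈ Ici (0:ℝ), ∀ i,
      HasDerivWithinAt (fun s => w s i) ((H x).mulVec (w x) i) (Ici 0) x)
    (hHoff : ∀ x ∈ Ici (0:ℝ), ∀ i j, i ≠ j → 0 ≤ H x i j)
    (hstar : ℝ → ℝ)
    (hcol : ∀ x ∈ Ici (0:ℝ), ∀ j, ∑ i, H x i j ≤ hstar x)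
    (hstarcont : ContinuousOn hstar (Ici 0))
    (t : ℝ) (ht : 0 ≤ t) :
    ∑ i, |w t i| ≤ Real.exp (∫ τ in (0:ℝ)..t, hstar τ) * ∑ i, |w 0 i| := by
  classical
  set hst2 : ℝ → ℝ := fun x => hstar (max x 0) with hst2def
  have hst2cont : Continuous hst2 :=
    hstarcont.comp_continuous (continuous_id.max continuous_const) fun x => le_max_right x 0
  have hst2eq : ∀ x, 0 ≤ x → hst2 x = hstar x := fun x hx => by
    simp [hst2def, max_eq_left hx]
  set g : ℝ → ℝ := fun s => ∑ i, |w s i| with gdef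
  have hwc : ∀ i, ContinuousOn (fun s => w s i) (Ici (0:ℝ)) := fun i x hx =>
    (hw x hx i).continuousWithinAt
  have hgc : ContinuousOn g (Ici (0:ℝ)) :=
    continuousOn_finset_sum _ fun i _ => (hwc i).abs
  have hg0 : 0 ≤ g 0 := Finset.sum_nonneg fun i _ => abs_nonneg _
  -- key slope estimate
  have key : ∀ x ∈ Ico (0:ℝ) t, ∀ r, hstar x * g x < r →
      ∃ᶠ z in 𝓝[>] x, slope g x z < r := by
    intro x hx r hr
    have hx0 : (0:ℝ) ≤ x := hx.1
    set d : Fin S → ℝ := fun i => (H x).mulVec (w x) i with ddef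
    have hdsum : ∀ i, d i = ∑ j, H x i j * w x j := by
      intro i; simp [ddef, Matrix.mulVec, dotProduct]
    have hmono : 𝓝[>] x ≤ 𝓝[Ici (0:ℝ) \ {x}] x :=
      nhdsWithin_mono x fun z hz => ⟨le_trans hx0 (le_of_lt hz), ne_of_gt hz⟩
    have hmono' : 𝓝[>] x ≤ 𝓝[Ici (0:ℝ)] x :=
      nhdsWithin_mono x fun z hz => le_trans hx0 (le_of_lt hz)
    have per_i : ∀ i : Fin S, ∃ ci : ℝ, ci ≤ ∑ j, H x i j * |w x j| ∧
        ∀ η > (0:ℝ), ∀ᶠ z in 𝓝[>] x, slope (fun s => |w s i|) x z < ci + η := by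
      intro i
      have hslope : Tendsto (slope (fun s => w s i) x) (𝓝[>] x) (𝓝 (d i)) :=
        ((hasDerivWithinAt_iff_tendsto_slope.1 (hw x hx0 i)).mono_left hmono)
      have hcw : Tendsto (fun z => w z i) (𝓝[>] x) (𝓝 (w x i)) :=
        (hwc i x hx0).mono_left hmono'
      have hoff : ∀ j, j ≠ i → 0 ≤ H x i j := fun j hj => hHoff x hx0 i j (Ne.symm hj)
      rcases lt_trichotomy (w x i) 0 with hneg | hzero | hpos
      · refine ⟨-d i, ?_, ?_⟩
        · rw [hdsum]
          rw [← Finset.sum_neg_distrib]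
          refine Finset.sum_le_sum fun j _ => ?_
          by_cases hji : j = i
          · subst hji
            rw [abs_of_neg hneg]; ring_nf; exact le_rfl
          · have := hoff j hji
            nlinarith [neg_abs_le (w x j), abs_nonneg (w x j)]
        · intro η hη
          have h1 : ∀ᶠ z in 𝓝[>] x, w z i < 0 := hcw.eventually_lt_const hneg
          have h2 : ∀ᶠ z in 𝓝[>] x, -(slope (fun s => w s i) x z) < -d i + η :=
            (hslope.neg).eventually_lt_const (by linarith)
          filter_upwards [h1, h2, self_mem_nhdsWithin] with z hz1 hz2 hz3
          have hzx : x < z := hz3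
          rw [slope_def_field] at hz2 ⊢
          rw [abs_of_neg hz1, abs_of_neg hneg]
          have : (-w z i - -w x i) / (z - x) = -((w z i - w x i) / (z - x)) := by ring
          rw [this]; exact hz2
      · refine ⟨|d i|, ?_, ?_⟩
        · rw [hdsum]
          refine le_trans (Finset.abs_sum_le_sum_abs _ _) (Finset.sum_le_sum fun j _ => ?_)
          by_cases hji : j = i
          · subst hji; rw [hzero]; simp
          · rw [abs_mul, abs_of_nonneg (hoff j hji)]
        · intro η hη
          have h2 : ∀ᶠ z in 𝓝[>] x, |slope (fun s => w s i) x z| < |d i| + η :=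
            (hslope.abs).eventually_lt_const (by linarith)
          filter_upwards [h2, self_mem_nhdsWithin] with z hz2 hz3
          have hzx : x < z := hz3
          rw [slope_def_field] at hz2 ⊢
          rw [hzero] at hz2 ⊢
          calc (|w z i| - |(0:ℝ)|) / (z - x) = |w z i - 0| / (z - x) := by simp
            _ = |(w z i - 0) / (z - x)| := by
                rw [abs_div, abs_of_pos (by linarith : (0:ℝ) < z - x)]
            _ < |d i| + η := hz2
      · refine ⟨d i, ?_, ?_⟩
        · rw [hdsum]
          refine Finset.sum_le_sum fun j _ => ?_
          by_cases hji : j = i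
          · subst hji; rw [abs_of_pos hpos]
          · exact mul_le_mul_of_nonneg_left (le_abs_self _) (hoff j hji)
        · intro η hη
          have h1 : ∀ᶠ z in 𝓝[>] x, 0 < w z i := hcw.eventually_const_lt hpos
          have h2 : ∀ᶠ z in 𝓝[>] x, slope (fun s => w s i) x z < d i + η :=
            hslope.eventually_lt_const (by linarith)
          filter_upwards [h1, h2] with z hz1 hz2
          rw [slope_def_field] at hz2 ⊢
          rw [abs_of_pos hz1, abs_of_pos hpos]
          exact hz2
    choose c hcle hcev using per_i
    have hcsum : ∑ i, c i ≤ hstar x * g x := by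
      calc ∑ i, c i ≤ ∑ i, ∑ j, H x i j * |w x j| := Finset.sum_le_sum fun i _ => hcle i
        _ = ∑ j, (∑ i, H x i j) * |w x j| := by
            rw [Finset.sum_comm]
            exact Finset.sum_congr rfl fun j _ => (Finset.sum_mul _ _ _).symm
        _ ≤ ∑ j, hstar x * |w x j| :=
            Finset.sum_le_sum fun j _ =>
              mul_le_mul_of_nonneg_right (hcol x hx0 j) (abs_nonneg _)
        _ = hstar x * g x := by rw [gdef]; exact (Finset.mul_sum _ _ _).symm
    have hΔ : 0 < r - ∑ i, c i := by linarith
    set η : ℝ := (r - ∑ i, c i) / (S + 1) with hηdef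
    have hηpos : 0 < η := div_pos hΔ (by positivity)
    have hev : ∀ᶠ z in 𝓝[>] x, ∀ i, slope (fun s => |w s i|) x z < c i + η :=
      eventually_all.2 fun i => hcev i η hηpos
    refine ((hev.and self_mem_nhdsWithin).mono ?_).frequently
    rintro z ⟨hz1, hz2⟩
    have hzx : x < z := hz2
    have hslope_eq : slope g x z = ∑ i, slope (fun s => |w s i|) x z := by
      simp only [slope_def_field, gdef]
      rw [← Finset.sum_div, ← Finset.sum_sub_distrib]
    rw [hslope_eq]
    calc ∑ i, slope (fun s => |w s i|) x z < ∑ i, (c i + η) :=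
          Finset.sum_lt_sum_of_nonempty Finset.univ_nonempty fun i _ => hz1 i
      _ = ∑ i, c i + S * η := by
          rw [Finset.sum_add_distrib, Finset.sum_const, Finset.card_univ, Fintype.card_fin,
            nsmul_eq_mul]
      _ < ∑ i, c i + (S + 1) * η := by nlinarith
      _ = r := by rw [hηdef]; field_simp; ring
  -- Gronwall via the fencing lemma, for each ε > 0
  have main : ∀ ε > (0:ℝ), g t ≤ (g 0 + ε) * Real.exp ((∫ τ in (0:ℝ)..t, hst2 τ) + ε * t) := by
    intro ε hε
    set Bf : ℝ → ℝ := fun x => (g 0 + ε) * Real.exp ((∫ τ in (0:ℝ)..x, hst2 τ) + ε * x) with Bfdef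
    have hBfpos : ∀ x, 0 < Bf x := fun x => mul_pos (by linarith) (Real.exp_pos _)
    have hBf : ∀ x, HasDerivAt Bf ((hst2 x + ε) * Bf x) x := by
      intro x
      have h1 : HasDerivAt (fun u => (∫ τ in (0:ℝ)..u, hst2 τ) + ε * u) (hst2 x + ε) x := by
        have ha : HasDerivAt (fun u => ∫ τ in (0:ℝ)..u, hst2 τ) (hst2 x) x :=
          (hst2cont.integral_hasStrictDerivAt 0 x).hasDerivAt
        have hb : HasDerivAt (fun u => ε * u) ε x := by
          simpa using (hasDerivAt_id x).const_mul ε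
        exact ha.add hb
      have h2 := (h1.exp).const_mul (g 0 + ε)
      convert h2 using 1
      · rfl
      · rfl
      simp only [Bf]; ring
    have hgc' : ContinuousOn g (Icc 0 t) := hgc.mono (Icc_subset_Ici_self)
    have bound : ∀ x ∈ Ico (0:ℝ) t, g x = Bf x → hstar x * g x < (hst2 x + ε) * Bf x := by
      intro x hx hgx
      rw [hst2eq x hx.1, hgx]
      nlinarith [hBfpos x]
    have ha : g 0 ≤ Bf 0 := by
      rw [Bfdef]
      simp [intervalIntegral.integral_same]
      nlinarith [Real.exp_pos (0:ℝ)]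
    have := image_le_of_liminf_slope_right_lt_deriv_boundary (f := g)
      (f' := fun x => hstar x * g x) (B := Bf) (B' := fun x => (hst2 x + ε) * Bf x)
      hgc' key ha hBf bound (right_mem_Icc.mpr ht)
    exact this
  -- take the limit ε → 0⁺
  have hlim : Tendsto (fun ε : ℝ => (g 0 + ε) * Real.exp ((∫ τ in (0:ℝ)..t, hst2 τ) + ε * t))
      (𝓝[>] 0) (𝓝 ((g 0 + 0) * Real.exp ((∫ τ in (0:ℝ)..t, hst2 τ) + 0 * t))) := by
    apply Tendsto.mono_left _ nhdsWithin_le_nhds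
    exact (Continuous.tendsto (by continuity) 0)
  have hle : g t ≤ (g 0 + 0) * Real.exp ((∫ τ in (0:ℝ)..t, hst2 τ) + 0 * t) :=
    ge_of_tendsto hlim (eventually_nhdsWithin_of_forall fun ε hε => main ε hε)
  have hint : (∫ τ in (0:ℝ)..t, hst2 τ) = ∫ τ in (0:ℝ)..t, hstar τ :=
    intervalIntegral.integral_congr fun τ hτ =>
      hst2eq τ (by rw [uIcc_of_le ht] at hτ; exact hτ.1)
  rw [hint] at hle
  simpa [mul_comm] using hle


/-- Theorem 1 (upper bound): if `z*` and `z**` both solve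
`z' = B(t)z + f(t)` on `[0,∞)`, `D` is invertible with nonnegative entries and
`D B(t) D⁻¹` is essentially nonnegative, then
`‖D(z*(t) − z**(t))‖₁ ≤ exp(∫₀ᵗ h*(τ) dτ) ‖D(z*(0) − z**(0))‖₁`,
where `h*(t)` is the largest column sum of `D B(t) D⁻¹`. -/
theorem theorem_one_upper_bound
    (S : ℕ) (hS : 1 ≤ S)
    (B : ℝ → Matrix (Fin S) (Fin S) ℝ) (f : ℝ → Fin S → ℝ)
    (hBcont : ∀ i j, ContinuousOn (fun t => B t i j) (Ici (0 : ℝ)))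
    (hfcont : ∀ i, ContinuousOn (fun t => f t i) (Ici (0 : ℝ)))
    (z₁ z₂ : ℝ → Fin S → ℝ)
    (hz₁ : ∀ t ∈ Ici (0 : ℝ), ∀ i,
      HasDerivWithinAt (fun s => z₁ s i) ((B t).mulVec (z₁ t) i + f t i) (Ici 0) t)
    (hz₂ : ∀ t ∈ Ici (0 : ℝ), ∀ i,
      HasDerivWithinAt (fun s => z₂ s i) ((B t).mulVec (z₂ t) i + f t i) (Ici 0) t)
    (D : Matrix (Fin S) (Fin S) ℝ)
    (hDinv : IsUnit D.det)
    (hDnonneg : ∀ i j, 0 ≤ D i j)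
    (hHess : ∀ t ∈ Ici (0 : ℝ), ∀ i j, i ≠ j → 0 ≤ (D * B t * D⁻¹) i j)
    (hstar : ℝ → ℝ)
    (hhstar : ∀ t, hstar t = ⨆ j, ∑ i, (D * B t * D⁻¹) i j) :
    ∀ t ∈ Ici (0 : ℝ),
      ∑ i, |D.mulVec (z₁ t - z₂ t) i| ≤
        Real.exp (∫ τ in (0 : ℝ)..t, hstar τ) * ∑ i, |D.mulVec (z₁ 0 - z₂ 0) i| := by
  haveI : Nonempty (Fin S) := Fin.pos_iff_nonempty.mp hS
  intro t ht
  set H : ℝ → Matrix (Fin S) (Fin S) ℝ := fun x => D * B x * D⁻¹ with Hdef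
  set w : ℝ → Fin S → ℝ := fun s i => D.mulVec (z₁ s - z₂ s) i with wdef
  have hDD : ∀ x, H x * D = D * B x := by
    intro x
    rw [Hdef, Matrix.mul_assoc (D * B x), Matrix.nonsing_inv_mul D hDinv, Matrix.mul_one]
  -- derivative of w
  have hw : ∀ x ∈ Ici (0:ℝ), ∀ i,
      HasDerivWithinAt (fun s => w s i) ((H x).mulVec (w x) i) (Ici 0) x := by
    intro x hx i
    have h1 : ∀ j, HasDerivWithinAt (fun s => z₁ s j - z₂ s j)
        ((B x).mulVec (z₁ x - z₂ x) j) (Ici 0) x := by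
      intro j
      have h := (hz₁ x hx j).sub (hz₂ x hx j)
      have : (B x).mulVec (z₁ x) j + f x j - ((B x).mulVec (z₂ x) j + f x j)
          = (B x).mulVec (z₁ x - z₂ x) j := by
        rw [Matrix.mulVec_sub]; simp
      rwa [this] at h
    have h2 : HasDerivWithinAt (fun s => ∑ j, D i j * (z₁ s j - z₂ s j))
        (∑ j, D i j * (B x).mulVec (z₁ x - z₂ x) j) (Ici 0) x :=
      HasDerivWithinAt.fun_sum fun j _ => (h1 j).const_mul _
    have heqf : (fun s => ∑ j, D i j * (z₁ s j - z₂ s j)) = fun s => w s i := by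
      funext s
      simp [wdef, Matrix.mulVec, dotProduct]
    have heqv : (∑ j, D i j * (B x).mulVec (z₁ x - z₂ x) j) = (H x).mulVec (w x) i := by
      have hwx : w x = D.mulVec (z₁ x - z₂ x) := by funext i; rfl
      rw [hwx, Matrix.mulVec_mulVec, hDD, ← Matrix.mulVec_mulVec]
      simp [Matrix.mulVec, dotProduct]
    rw [← heqf, ← heqv] at *
    exact h2
  -- column sums bounded by hstar
  have hcol : ∀ x ∈ Ici (0:ℝ), ∀ j, ∑ i, H x i j ≤ hstar x := by
    intro x _ j
    rw [hhstar x]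
    exact le_ciSup (Finite.bddAbove_range fun j => ∑ i, H x i j) j
  -- continuity of hstar on [0, ∞)
  have hne : (Finset.univ : Finset (Fin S)).Nonempty := Finset.univ_nonempty
  have hentry : ∀ i j, ContinuousOn (fun x => H x i j) (Ici (0:ℝ)) := by
    intro i j
    simp only [Hdef, Matrix.mul_apply]
    exact continuousOn_finset_sum _ fun l _ =>
      (continuousOn_finset_sum _ fun k _ => continuousOn_const.mul (hBcont k l)).mul
        continuousOn_const
  have hstarcont : ContinuousOn hstar (Ici (0:ℝ)) := by
    have h1 : ContinuousOn (fun x => Finset.univ.sup' hne fun j => ∑ i, H x i j) (Ici (0:ℝ)) :=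
      ContinuousOn.finset_sup'_apply hne fun j _ =>
        continuousOn_finset_sum _ fun i _ => hentry i j
    refine h1.congr fun x _ => ?_
    rw [hhstar x, ← Finset.sup'_univ_eq_ciSup]
  exact gronwall_l1 H w hw hHess hstar hcol hstarcont t ht
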